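/- There is no counit ε : 𝓑 → B(0) making the comultiplication Δ on the sl2-crystal 𝓑 = ⨆_{n∈ℕ} B(n) ⊗ B(n)^∨, defined by Δ(b ⊗ b') = (b ⊗ y^n) ⊗ (x^n ⊗ b') for b ⊗ b' ∈ B(n) ⊗ B(n)^∨, into a counital coalgebra; i.e., no map ε of pointed sets satisfies (ε ⊗ id)∘Δ = id = (id ⊗ ε)∘Δ under the canonical identifications. -/

import Mathlib

/-- `x^i y^j` is represented as `(i, j) : ℕ × ℕ`, an element of the sl2-crystal `B(i+j)`. -/
def et (p : ℕ × ℕ) : Option (ℕ × ℕ) := if p.1 = 0 then none else some (p.1 - 1, p.2 + 1)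
def ft (p : ℕ × ℕ) : Option (ℕ × ℕ) := if p.2 = 0 then none else some (p.1 + 1, p.2 - 1)
def eps (p : ℕ × ℕ) : ℤ := p.1
def phi (p : ℕ × ℕ) : ℤ := p.2
def wt (p : ℕ × ℕ) : ℤ := (p.2 : ℤ) - (p.1 : ℤ)

/-- Kashiwara tensor product rule for `ẽ` on a pair of elements. -/
def etT (b : (ℕ × ℕ) × (ℕ × ℕ)) : Option ((ℕ × ℕ) × (ℕ × ℕ)) :=
  if eps b.2 ≤ phi b.1 then (et b.1).map (fun a => (a, b.2)) else (et b.2).map (fun a => (b.1, a))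

/-- Kashiwara tensor product rule for `f̃` on a pair of elements. -/
def ftT (b : (ℕ × ℕ) × (ℕ × ℕ)) : Option ((ℕ × ℕ) × (ℕ × ℕ)) :=
  if eps b.2 < phi b.1 then (ft b.1).map (fun a => (a, b.2)) else (ft b.2).map (fun a => (b.1, a))

def epsT (b : (ℕ × ℕ) × (ℕ × ℕ)) : ℤ := max (eps b.1) (eps b.2 - wt b.1)
def phiT (b : (ℕ × ℕ) × (ℕ × ℕ)) : ℤ := max (phi b.1 + wt b.2) (phi b.2)
def wtT (b : (ℕ × ℕ) × (ℕ × ℕ)) : ℤ := wt b.1 + wt b.2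

/-- Iterated application of a pointed (partial) operator. -/
def iterOp {α : Type} (g : α → Option α) : ℕ → α → Option α
  | 0, a => some a
  | n + 1, a => (g a).bind (iterOp g n)

/-- The underlying set of the sl2-crystal `B(n)`: monomials `x^i y^j` with `i + j = n`. -/
def Bel (n : ℕ) : Type := {p : ℕ × ℕ // p.1 + p.2 = n}

def etB {n : ℕ} (b : Bel n) : Option (Bel n) :=
  if h : b.val.1 = 0 then none
  else some ⟨(b.val.1 - 1, b.val.2 + 1), by have := b.2; omega⟩

def ftB {n : ℕ} (b : Bel n) : Option (Bel n) :=
  if h : b.val.2 = 0 then none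
  else some ⟨(b.val.1 + 1, b.val.2 - 1), by have := b.2; omega⟩

/-- The underlying pointed set of `𝓑 = ⨆_{n∈ℕ} B(n) ⊗ B(n)^∨`: pairs `(b, b')` with
`b ∈ B(n)` and `b' ∈ B(n)^∨` (identified with `B(n)` via `(x^i y^j)^∨ ↦ x^j y^i`). -/
def BB : Type := {p : (ℕ × ℕ) × (ℕ × ℕ) // p.1.1 + p.1.2 = p.2.1 + p.2.2}

def deg (q : BB) : ℕ := q.val.1.1 + q.val.1.2

/-- First output of the comultiplication: `b ⊗ b' ↦ b ⊗ y^n` (the dual of the lowest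
weight element `x^n` of `B(n)` is stored as `y^n`). -/
def d1 (q : BB) : BB := ⟨(q.val.1, (0, deg q)), by simp only [deg]; omega⟩

/-- Second output of the comultiplication: `b ⊗ b' ↦ x^n ⊗ b'`. -/
def d2 (q : BB) : BB := ⟨((deg q, 0), q.val.2), by have := q.2; simp only [deg]; omega⟩

/-- The comultiplication `Δ(b ⊗ b') = (b ⊗ y^n) ⊗ (x^n ⊗ b')` on `𝓑`. -/
def DeltaBB (q : BB) : BB × BB := (d1 q, d2 q)

/-- There is no counit `ε : 𝓑 → B(0)` (a map of pointed sets
`ε : BB → Option Unit`) making `Δ` counital, i.e. satisfying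
`(ε ⊗ id) ∘ Δ = id = (id ⊗ ε) ∘ Δ` under the canonical identifications. -/
theorem stmt8 :
    ¬ ∃ ε : BB → Option Unit,
      ∀ q : BB,
        (ε (DeltaBB q).1).map (fun _ => (DeltaBB q).2) = some q ∧
        (ε (DeltaBB q).2).map (fun _ => (DeltaBB q).1) = some q := by
  rintro ⟨ε, h⟩
  have h1 := (h ⟨((0,1),(1,0)), rfl⟩).1
  cases hε : ε (DeltaBB ⟨((0,1),(1,0)), rfl⟩).1 <;>
    rw [hε] at h1 <;>
    exact absurd (congrArg (Option.map (fun q : BB => q.val.1.1)) h1) (by intro h2; cases h2)
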